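/- For every integer K ≥ 1 and every integer 1 ≤ k ≤ K, the k-order network distance d_D^k restricted to K-order dissimilarity networks is a metric on the space of K-order dissimilarity networks modulo k-isomorphism: it is nonnegative, symmetric, satisfies the triangle inequality, and d_D^k(D_X,D_Y) = 0 holds if and only if D_X and D_Y are k-isomorphic. -/

import Mathlib

open scoped ENNReal

/-- A correspondence between node sets `X` and `Y`: a set of pairs in which every
`x : X` and every `y : Y` appears. -/
def IsCorrespondence {X Y : Type} (C : Set (X × Y)) : Prop :=
  (∀ x : X, ∃ y : Y, (x, y) ∈ C) ∧ (∀ y : Y, ∃ x : X, (x, y) ∈ C)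

/-- The rank of a tuple: the number of distinct elements appearing in it. -/
noncomputable def tupleRank {X : Type} {n : ℕ} (t : Fin n → X) : ℕ :=
  Set.ncard (Set.range t)

/-- A `K`-order network on a finite nonempty node set `X`: relationship functions
`r k : X^{k+1} → [0,1]` for `0 ≤ k ≤ K`, symmetric under permutations of the arguments,
and such that any subtuple with the same set of distinct elements as the full tuple
carries the same relationship value. -/
structure HONetwork (K : ℕ) (X : Type) [Fintype X] [Nonempty X] : Type where
  r : ∀ k : ℕ, (Fin (k + 1) → X) → ℝ
  r_nonneg : ∀ k, k ≤ K → ∀ t : Fin (k + 1) → X, 0 ≤ r k t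
  r_le_one : ∀ k, k ≤ K → ∀ t : Fin (k + 1) → X, r k t ≤ 1
  symm : ∀ k, k ≤ K → ∀ (t : Fin (k + 1) → X) (σ : Equiv.Perm (Fin (k + 1))),
    r k (t ∘ σ) = r k t
  identity : ∀ k, k ≤ K → ∀ k', k' ≤ K → ∀ (t : Fin (k + 1) → X)
    (ι : Fin (k' + 1) → Fin (k + 1)), StrictMono ι →
    Set.range (t ∘ ι) = Set.range t → r k' (t ∘ ι) = r k t

/-- The `k`-order network difference `Γ^k_{X,Y}(C)`: the largest value of
`|r_X^k(x_{0:k}) − r_Y^k(y_{0:k})|` over tuples of pairs of correspondents in `C`. -/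
noncomputable def Gamma {K : ℕ} {X Y : Type} [Fintype X] [Nonempty X] [Fintype Y] [Nonempty Y]
    (NX : HONetwork K X) (NY : HONetwork K Y) (k : ℕ) (C : Set (X × Y)) : ℝ :=
  sSup { v : ℝ | ∃ (tx : Fin (k + 1) → X) (ty : Fin (k + 1) → Y),
    (∀ i, (tx i, ty i) ∈ C) ∧ v = |NX.r k tx - NY.r k ty| }

/-- The `k`-order network distance: minimum of `Γ^k_{X,Y}(C)` over correspondences `C`. -/
noncomputable def dN {K : ℕ} {X Y : Type} [Fintype X] [Nonempty X] [Fintype Y] [Nonempty Y]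
    (k : ℕ) (NX : HONetwork K X) (NY : HONetwork K Y) : ℝ :=
  sInf { v : ℝ | ∃ C : Set (X × Y), IsCorrespondence C ∧ v = Gamma NX NY k C }

/-- The `p`-norm of a vector in `ℝ^{K+1}`, `1 ≤ p ≤ ∞`. -/
noncomputable def pNorm (K : ℕ) (p : ℝ≥0∞) [Fact (1 ≤ p)] (v : Fin (K + 1) → ℝ) : ℝ :=
  ‖(WithLp.equiv p (Fin (K + 1) → ℝ)).symm v‖

/-- The `p`-norm network distance: minimum over correspondences `C` of the `p`-norm of the
vector `(Γ^0_{X,Y}(C), …, Γ^K_{X,Y}(C))`. -/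
noncomputable def dNp {K : ℕ} {X Y : Type} [Fintype X] [Nonempty X] [Fintype Y] [Nonempty Y]
    (p : ℝ≥0∞) [Fact (1 ≤ p)] (NX : HONetwork K X) (NY : HONetwork K Y) : ℝ :=
  sInf { v : ℝ | ∃ C : Set (X × Y), IsCorrespondence C ∧
    v = pNorm K p (fun k : Fin (K + 1) => Gamma NX NY (k : ℕ) C) }

/-- Two `K`-order networks are `k`-isomorphic if a bijection of the node sets preserves the
`k`-order relationship functions. -/
def kIsomorphic {K : ℕ} {X Y : Type} [Fintype X] [Nonempty X] [Fintype Y] [Nonempty Y]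
    (k : ℕ) (NX : HONetwork K X) (NY : HONetwork K Y) : Prop :=
  ∃ φ : X ≃ Y, ∀ t : Fin (k + 1) → X, NY.r k (fun i => φ (t i)) = NX.r k t

/-- Two `K`-order networks are isomorphic if a bijection of the node sets preserves the
`k`-order relationship functions for all `0 ≤ k ≤ K`. -/
def Isomorphic {K : ℕ} {X Y : Type} [Fintype X] [Nonempty X] [Fintype Y] [Nonempty Y]
    (NX : HONetwork K X) (NY : HONetwork K Y) : Prop :=
  ∃ φ : X ≃ Y, ∀ k, k ≤ K → ∀ t : Fin (k + 1) → X, NY.r k (fun i => φ (t i)) = NX.r k t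

/-- A `K`-order dissimilarity network: a `K`-order network whose relationship functions
decompose as `r^k = d^k + ε · rank`, with nonnegative dissimilarity functions `d^k`
satisfying the order increasing property, and `0 < ε ≤ 1 − (1/K) · max d^K`. -/
structure DissimNetwork (K : ℕ) (X : Type) [Fintype X] [Nonempty X]
    extends HONetwork K X where
  dfun : ∀ k : ℕ, (Fin (k + 1) → X) → ℝ
  eps : ℝ
  dfun_nonneg : ∀ k, k ≤ K → ∀ t : Fin (k + 1) → X, 0 ≤ dfun k t
  decomp : ∀ k, k ≤ K → ∀ t : Fin (k + 1) → X,
    r k t = dfun k t + eps * (tupleRank t : ℝ)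
  order_incr : ∀ k : ℕ, k + 1 ≤ K → ∀ t : Fin (k + 2) → X,
    dfun k (fun i : Fin (k + 1) => t i.castSucc) ≤ dfun (k + 1) t
  eps_pos : 0 < eps
  eps_le : ∀ t : Fin (K + 1) → X, eps ≤ 1 - (1 / (K : ℝ)) * dfun K t

/-- A `K`-order proximity network: a `K`-order network whose relationship functions
decompose as `r^k = p^k − ε · rank`, with nonnegative proximity functions `p^k`
satisfying the order decreasing property, and `0 < ε ≤ (1/K) · min p^K`. -/
structure ProxNetwork (K : ℕ) (X : Type) [Fintype X] [Nonempty X]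
    extends HONetwork K X where
  pfun : ∀ k : ℕ, (Fin (k + 1) → X) → ℝ
  eps : ℝ
  pfun_nonneg : ∀ k, k ≤ K → ∀ t : Fin (k + 1) → X, 0 ≤ pfun k t
  decomp : ∀ k, k ≤ K → ∀ t : Fin (k + 1) → X,
    r k t = pfun k t - eps * (tupleRank t : ℝ)
  order_decr : ∀ k : ℕ, k + 1 ≤ K → ∀ t : Fin (k + 2) → X,
    pfun (k + 1) t ≤ pfun k (fun i : Fin (k + 1) => t i.castSucc)
  eps_pos : 0 < eps
  eps_le : ∀ t : Fin (K + 1) → X, eps ≤ (1 / (K : ℝ)) * pfun K t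

section Aux

variable {K : ℕ} {X Y Z : Type} [Fintype X] [Nonempty X] [Fintype Y] [Nonempty Y]
  [Fintype Z] [Nonempty Z]

lemma gamma_nonneg (NX : HONetwork K X) (NY : HONetwork K Y) (k : ℕ) (C : Set (X × Y)) :
    0 ≤ Gamma NX NY k C := by
  apply Real.sSup_nonneg
  rintro v ⟨tx, ty, -, rfl⟩
  exact abs_nonneg _

lemma gamma_bddAbove (NX : HONetwork K X) (NY : HONetwork K Y) (k : ℕ) (C : Set (X × Y)) :
    BddAbove { v : ℝ | ∃ (tx : Fin (k + 1) → X) (ty : Fin (k + 1) → Y),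
      (∀ i, (tx i, ty i) ∈ C) ∧ v = |NX.r k tx - NY.r k ty| } := by
  apply Set.Finite.bddAbove
  apply Set.Finite.subset (Set.finite_range
    (fun p : ((Fin (k + 1) → X) × (Fin (k + 1) → Y)) => |NX.r k p.1 - NY.r k p.2|))
  rintro v ⟨tx, ty, -, rfl⟩
  exact ⟨(tx, ty), rfl⟩

lemma le_gamma (NX : HONetwork K X) (NY : HONetwork K Y) (k : ℕ) (C : Set (X × Y))
    (tx : Fin (k + 1) → X) (ty : Fin (k + 1) → Y) (h : ∀ i, (tx i, ty i) ∈ C) :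
    |NX.r k tx - NY.r k ty| ≤ Gamma NX NY k C :=
  le_csSup (gamma_bddAbove NX NY k C) ⟨tx, ty, h, rfl⟩

lemma gamma_le (NX : HONetwork K X) (NY : HONetwork K Y) (k : ℕ) (C : Set (X × Y)) (a : ℝ)
    (h0 : 0 ≤ a)
    (h : ∀ (tx : Fin (k + 1) → X) (ty : Fin (k + 1) → Y),
      (∀ i, (tx i, ty i) ∈ C) → |NX.r k tx - NY.r k ty| ≤ a) :
    Gamma NX NY k C ≤ a := by
  apply Real.sSup_le _ h0
  rintro v ⟨tx, ty, hm, rfl⟩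
  exact h tx ty hm

lemma dN_set_finite (NX : HONetwork K X) (NY : HONetwork K Y) (k : ℕ) :
    { v : ℝ | ∃ C : Set (X × Y), IsCorrespondence C ∧ v = Gamma NX NY k C }.Finite := by
  apply Set.Finite.subset (Set.finite_range (fun C : Set (X × Y) => Gamma NX NY k C))
  rintro v ⟨C, -, rfl⟩
  exact ⟨C, rfl⟩

lemma univ_corr : IsCorrespondence (Set.univ : Set (X × Y)) :=
  ⟨fun x => ⟨Classical.arbitrary Y, trivial⟩, fun y => ⟨Classical.arbitrary X, trivial⟩⟩

lemma dN_set_nonempty (NX : HONetwork K X) (NY : HONetwork K Y) (k : ℕ) :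
    { v : ℝ | ∃ C : Set (X × Y), IsCorrespondence C ∧ v = Gamma NX NY k C }.Nonempty :=
  ⟨Gamma NX NY k Set.univ, Set.univ, univ_corr, rfl⟩

lemma dN_exists_opt (NX : HONetwork K X) (NY : HONetwork K Y) (k : ℕ) :
    ∃ C : Set (X × Y), IsCorrespondence C ∧ dN k NX NY = Gamma NX NY k C :=
  (dN_set_nonempty NX NY k).csInf_mem (dN_set_finite NX NY k)

lemma dN_le (NX : HONetwork K X) (NY : HONetwork K Y) (k : ℕ) (C : Set (X × Y))
    (hC : IsCorrespondence C) : dN k NX NY ≤ Gamma NX NY k C :=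
  csInf_le (dN_set_finite NX NY k).bddBelow ⟨C, hC, rfl⟩

lemma dN_nonneg (NX : HONetwork K X) (NY : HONetwork K Y) (k : ℕ) :
    0 ≤ dN k NX NY := by
  apply Real.sInf_nonneg
  rintro v ⟨C, -, rfl⟩
  exact gamma_nonneg NX NY k C

/-- Key lemma: in a dissimilarity network, if the `k`-order relationship value of the
tuple `(y, y', …, y')` equals that of the constant tuple `(y, …, y)`, then `y = y'`. -/
lemma dissim_key {k : ℕ} (hK : 1 ≤ K) (hk1 : 1 ≤ k) (hk : k ≤ K)
    (DY : DissimNetwork K Y) (y y' : Y)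
    (h : DY.r k (fun i => if (i : ℕ) = 0 then y else y') = DY.r k (fun _ => y)) :
    y = y' := by
  by_contra hne
  set ty : Fin (k + 1) → Y := fun i => if (i : ℕ) = 0 then y else y' with hty
  set t2 : Fin 2 → Y := fun j => if (j : ℕ) = 0 then y else y' with ht2
  set t1 : Fin 1 → Y := fun _ => y with ht1
  -- ranges
  have hr2 : Set.range t2 = {y, y'} := by
    ext z
    constructor
    · rintro ⟨j, rfl⟩
      by_cases hj : (j : ℕ) = 0 <;> simp only [ht2, hj, ↓reduceIte] <;> simp
    · rintro (rfl | rfl)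
      · exact ⟨⟨0, by omega⟩, by simp [ht2]⟩
      · exact ⟨⟨1, by omega⟩, by simp [ht2]⟩
  have hrty : Set.range ty = {y, y'} := by
    ext z
    constructor
    · rintro ⟨j, rfl⟩
      by_cases hj : (j : ℕ) = 0 <;> simp only [hty, hj, ↓reduceIte] <;> simp
    · rintro (rfl | rfl)
      · exact ⟨⟨0, by omega⟩, by simp [hty]⟩
      · exact ⟨⟨1, by omega⟩, by simp [hty]⟩
  -- identity: r k ty = r 1 t2
  have h2k : 2 ≤ k + 1 := by omega
  have hid1 : DY.r 1 t2 = DY.r k ty := by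
    have hcomp : ty ∘ Fin.castLE h2k = t2 := by
      funext j; rfl
    have := DY.identity k hk 1 (le_trans hk1 hk) ty (Fin.castLE h2k)
      (Fin.strictMono_castLE h2k) (by rw [hcomp, hr2, hrty])
    rwa [hcomp] at this
  -- identity: r k (const y) = r 0 t1
  have hid0 : DY.r 0 t1 = DY.r k (fun _ => y) := by
    have hι : StrictMono (fun _ : Fin 1 => (0 : Fin (k + 1))) := by
      intro a b hab
      exact absurd hab (by omega)
    have := DY.identity k hk 0 (Nat.zero_le K) (fun _ => y)
      (fun _ : Fin 1 => (0 : Fin (k + 1))) hι (by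
        ext z
        simp [Function.comp, eq_comm])
    exact this
  -- decompositions
  have hrank1 : tupleRank t1 = 1 := by
    unfold tupleRank
    rw [Set.range_const]
    exact Set.ncard_singleton y
  have hrank2 : tupleRank t2 = 2 := by
    unfold tupleRank
    rw [hr2]
    exact Set.ncard_pair hne
  have hd0 : DY.r 0 t1 = DY.dfun 0 t1 + DY.eps * 1 := by
    have := DY.decomp 0 (Nat.zero_le K) t1
    rw [hrank1] at this
    exact_mod_cast this
  have hd1 : DY.r 1 t2 = DY.dfun 1 t2 + DY.eps * 2 := by
    have := DY.decomp 1 (le_trans hk1 hk) t2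
    rw [hrank2] at this
    exact_mod_cast this
  -- order increasing
  have hcast : (fun i : Fin 1 => t2 i.castSucc) = t1 := by
    funext i
    have h0 : (i : ℕ) = 0 := Nat.lt_one_iff.mp i.isLt
    simp [ht2, ht1, h0, Subsingleton.elim i 0]
  have hincr : DY.dfun 0 t1 ≤ DY.dfun 1 t2 := by
    have := DY.order_incr 0 (by omega) t2
    rwa [hcast] at this
  -- conclude
  have heq : DY.r 1 t2 = DY.r 0 t1 := by rw [hid1, hid0, h]
  have := DY.eps_pos
  rw [hd0, hd1] at heq
  linarith

end Aux

/-- for `K ≥ 1` and `1 ≤ k ≤ K`, the `k`-order network distance restricted to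
`K`-order dissimilarity networks is a metric modulo `k`-isomorphism. -/
theorem dD_metric (K k : ℕ) (hK : 1 ≤ K) (hk1 : 1 ≤ k) (hk : k ≤ K)
    (X Y Z : Type) [Fintype X] [Nonempty X] [Fintype Y] [Nonempty Y] [Fintype Z] [Nonempty Z]
    (DX : DissimNetwork K X) (DY : DissimNetwork K Y) (DZ : DissimNetwork K Z) :
    0 ≤ dN k DX.toHONetwork DY.toHONetwork ∧
    dN k DX.toHONetwork DY.toHONetwork = dN k DY.toHONetwork DX.toHONetwork ∧
    dN k DX.toHONetwork DY.toHONetwork ≤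
      dN k DX.toHONetwork DZ.toHONetwork + dN k DZ.toHONetwork DY.toHONetwork ∧
    (dN k DX.toHONetwork DY.toHONetwork = 0 ↔
      kIsomorphic k DX.toHONetwork DY.toHONetwork) := by
  set NX := DX.toHONetwork with hNX
  set NY := DY.toHONetwork with hNY
  set NZ := DZ.toHONetwork with hNZ
  refine ⟨dN_nonneg NX NY k, ?_, ?_, ?_⟩
  · -- symmetry
    have hset : { v : ℝ | ∃ C : Set (X × Y), IsCorrespondence C ∧ v = Gamma NX NY k C } =
        { v : ℝ | ∃ C : Set (Y × X), IsCorrespondence C ∧ v = Gamma NY NX k C } := by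
      ext v
      constructor
      · rintro ⟨C, hC, rfl⟩
        refine ⟨{ q | (q.2, q.1) ∈ C }, ⟨fun y => (hC.2 y).imp (fun x hx => hx),
          fun x => (hC.1 x).imp (fun y hy => hy)⟩, ?_⟩
        unfold Gamma
        congr 1
        ext w
        constructor
        · rintro ⟨tx, ty, hm, rfl⟩
          exact ⟨ty, tx, hm, (abs_sub_comm _ _)⟩
        · rintro ⟨ty, tx, hm, rfl⟩
          exact ⟨tx, ty, hm, (abs_sub_comm _ _)⟩
      · rintro ⟨C, hC, rfl⟩
        refine ⟨{ q | (q.2, q.1) ∈ C }, ⟨fun x => (hC.2 x).imp (fun y hy => hy),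
          fun y => (hC.1 y).imp (fun x hx => hx)⟩, ?_⟩
        unfold Gamma
        congr 1
        ext w
        constructor
        · rintro ⟨tx, ty, hm, rfl⟩
          exact ⟨ty, tx, hm, (abs_sub_comm _ _)⟩
        · rintro ⟨ty, tx, hm, rfl⟩
          exact ⟨tx, ty, hm, (abs_sub_comm _ _)⟩
    unfold dN
    rw [hset]
  · -- triangle inequality
    obtain ⟨C1, hC1, hG1⟩ := dN_exists_opt NX NZ k
    obtain ⟨C2, hC2, hG2⟩ := dN_exists_opt NZ NY k
    set C : Set (X × Y) := { p | ∃ z : Z, (p.1, z) ∈ C1 ∧ (z, p.2) ∈ C2 } with hCdef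
    have hCcorr : IsCorrespondence C := by
      constructor
      · intro x
        obtain ⟨z, hz⟩ := hC1.1 x
        obtain ⟨y, hy⟩ := hC2.1 z
        exact ⟨y, z, hz, hy⟩
      · intro y
        obtain ⟨z, hz⟩ := hC2.2 y
        obtain ⟨x, hx⟩ := hC1.2 z
        exact ⟨x, z, hx, hz⟩
    have hkey : Gamma NX NY k C ≤ Gamma NX NZ k C1 + Gamma NZ NY k C2 := by
      apply gamma_le
      · exact add_nonneg (gamma_nonneg _ _ _ _) (gamma_nonneg _ _ _ _)
      · intro tx ty hm
        have hz : ∀ i, ∃ z : Z, (tx i, z) ∈ C1 ∧ (z, ty i) ∈ C2 := fun i => hm i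
        choose tz htz1 htz2 using hz
        calc |NX.r k tx - NY.r k ty|
            ≤ |NX.r k tx - NZ.r k tz| + |NZ.r k tz - NY.r k ty| := abs_sub_le _ _ _
          _ ≤ Gamma NX NZ k C1 + Gamma NZ NY k C2 :=
            add_le_add (le_gamma NX NZ k C1 tx tz htz1) (le_gamma NZ NY k C2 tz ty htz2)
    calc dN k NX NY ≤ Gamma NX NY k C := dN_le NX NY k C hCcorr
      _ ≤ Gamma NX NZ k C1 + Gamma NZ NY k C2 := hkey
      _ = dN k NX NZ + dN k NZ NY := by rw [← hG1, ← hG2]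
  · -- zero iff isomorphic
    constructor
    · intro h0
      obtain ⟨C, hC, hG⟩ := dN_exists_opt NX NY k
      have hGzero : Gamma NX NY k C = 0 := by rw [← hG, h0]
      have hEq : ∀ (tx : Fin (k + 1) → X) (ty : Fin (k + 1) → Y),
          (∀ i, (tx i, ty i) ∈ C) → NX.r k tx = NY.r k ty := by
        intro tx ty hm
        have h1 := le_gamma NX NY k C tx ty hm
        rw [hGzero] at h1
        have := abs_nonneg (NX.r k tx - NY.r k ty)
        have habs : |NX.r k tx - NY.r k ty| = 0 := le_antisymm h1 this
        have := abs_eq_zero.mp habs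
        linarith
      -- uniqueness in Y-direction
      have huniqY : ∀ (x : X) (y y' : Y), (x, y) ∈ C → (x, y') ∈ C → y = y' := by
        intro x y y' hxy hxy'
        apply dissim_key hK hk1 hk DY y y'
        have e1 : NX.r k (fun _ => x) = NY.r k (fun i => if (i : ℕ) = 0 then y else y') := by
          apply hEq
          intro i
          by_cases hi : (i : ℕ) = 0 <;> simp [hi, hxy, hxy']
        have e2 : NX.r k (fun _ => x) = NY.r k (fun _ => y) := by
          apply hEq
          intro i
          exact hxy
        rw [hNY] at e1 e2
        rw [← e1, e2]
      -- uniqueness in X-direction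
      have huniqX : ∀ (y : Y) (x x' : X), (x, y) ∈ C → (x', y) ∈ C → x = x' := by
        intro y x x' hxy hx'y
        apply dissim_key hK hk1 hk DX x x'
        have e1 : NX.r k (fun i => if (i : ℕ) = 0 then x else x') = NY.r k (fun _ => y) := by
          apply hEq
          intro i
          by_cases hi : (i : ℕ) = 0 <;> simp [hi, hxy, hx'y]
        have e2 : NX.r k (fun _ => x) = NY.r k (fun _ => y) := by
          apply hEq
          intro i
          exact hxy
        rw [hNX] at e1 e2
        rw [e1, ← e2]
      -- build the bijection
      choose f hf using hC.1
      have hfinj : Function.Injective f := by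
        intro x x' hxx'
        exact huniqX (f x) x x' (hf x) (hxx' ▸ hf x')
      have hfsurj : Function.Surjective f := by
        intro y
        obtain ⟨x, hx⟩ := hC.2 y
        exact ⟨x, huniqY x (f x) y (hf x) hx⟩
      refine ⟨Equiv.ofBijective f ⟨hfinj, hfsurj⟩, ?_⟩
      intro t
      have := hEq t (fun i => f (t i)) (fun i => hf (t i))
      show NY.r k (fun i => f (t i)) = NX.r k t
      rw [← this]
    · rintro ⟨φ, hφ⟩
      apply le_antisymm _ (dN_nonneg NX NY k)
      set C : Set (X × Y) := Set.range (fun x => (x, φ x)) with hCdef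
      have hCcorr : IsCorrespondence C := by
        constructor
        · intro x
          exact ⟨φ x, x, rfl⟩
        · intro y
          exact ⟨φ.symm y, φ.symm y, by simp⟩
      have hGz : Gamma NX NY k C = 0 := by
        apply le_antisymm _ (gamma_nonneg NX NY k C)
        apply gamma_le _ _ _ _ _ le_rfl
        intro tx ty hm
        have hty : ty = fun i => φ (tx i) := by
          funext i
          obtain ⟨x, hx⟩ := hm i
          have h1 : tx i = x := (congrArg Prod.fst hx).symm
          have h2 : φ x = ty i := congrArg Prod.snd hx
          rw [h1, h2]
        rw [hty, hφ tx]
        simp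
      calc dN k NX NY ≤ Gamma NX NY k C := dN_le NX NY k C hCcorr
        _ = 0 := hGz
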